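/- Let d ≥ 1 and let g : ℝ^d → ℝ be twice continuously differentiable with ∇g Lipschitz continuous on ℝ^d with constant L_g > 0 (so in particular g is L_g-weakly convex). Suppose there exist R ≥ 0 and μ > 0 such that ⟨∇²g(z) v, v⟩ ≥ μ‖v‖² for all v ∈ ℝ^d whenever ‖z‖ ≥ R. Then there exists R₀ ≥ 0 such that for every γ ∈ (0, 1/(2L_g)] and every x ∈ ℝ^d with ‖x‖ ≥ R₀, the Moreau envelope g^γ is twice differentiable at x and ⟨∇²g^γ(x) v, v⟩ ≥ (μ/(1 + γμ))‖v‖² for all v ∈ ℝ^d; that is, g^γ is μ/(1 + γμ)-strongly convex outside the ball B(0, R₀). -/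

import Mathlib

open scoped RealInnerProductSpace

open scoped RealInnerProductSpace
open Asymptotics Filter InnerProductSpace Topology
set_option linter.unusedSectionVars false

variable {E : Type*} [NormedAddCommGroup E] [InnerProductSpace ℝ E] [CompleteSpace E] [FiniteDimensional ℝ E]


/-- quadratic error bound implies gradient -/
lemma aux_hasGradientAt_of_quad (f : E → ℝ) (a x : E) (C : ℝ) (hC : 0 ≤ C)
    (h : ∀ v : E, |f (x + v) - f x - ⟪a, v⟫| ≤ C * ‖v‖ ^ 2) :
    HasGradientAt f a x := by
  rw [hasGradientAt_iff_isLittleO_nhds_zero]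
  rw [Asymptotics.isLittleO_iff]
  intro c hc
  filter_upwards [Metric.ball_mem_nhds (0 : E) (show (0:ℝ) < c / (C + 1) by positivity)] with v hv
  have hv' : ‖v‖ < c / (C + 1) := by simpa using hv
  have h1 : C * ‖v‖ ≤ c := by
    have h2 : C * ‖v‖ ≤ C * (c / (C+1)) := by
      apply mul_le_mul_of_nonneg_left hv'.le hC
    have h3 : C * (c / (C+1)) ≤ c := by
      rw [mul_div_assoc'] at *
      rw [div_le_iff₀ (by linarith : (0:ℝ) < C + 1)]
      nlinarith [hc.le]
    linarith
  calc ‖f (x + v) - f x - ⟪a, v⟫‖ ≤ C * ‖v‖ ^ 2 := by rw [Real.norm_eq_abs]; exact h v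
    _ = (C * ‖v‖) * ‖v‖ := by ring
    _ ≤ c * ‖v‖ := by
        apply mul_le_mul_of_nonneg_right h1 (norm_nonneg v)
lemma aux_taylor (Lg : ℝ) (hLg0 : 0 ≤ Lg) (g : E → ℝ) (g' : E → E)
    (hg' : ∀ x, HasGradientAt g (g' x) x)
    (hlip : ∀ x y : E, ‖g' x - g' y‖ ≤ Lg * ‖x - y‖) :
    ∀ y : E, |g y - g 0 - ⟪g' 0, y⟫| ≤ 3/4 * Lg * ‖y‖ ^ 2 := by
  intro y
  set F : E → ℝ := fun z => g z - ⟪g' 0, z⟫ with hF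
  have hFd : ∀ z : E, HasFDerivAt F (toDual ℝ E (g' z) - toDual ℝ E (g' 0)) z := by
    intro z
    exact ((hg' z).hasFDerivAt).sub ((toDual ℝ E (g' 0)).hasFDerivAt)
  have hnorm : ∀ z : E, ‖toDual ℝ E (g' z) - toDual ℝ E (g' 0)‖ = ‖g' z - g' 0‖ := by
    intro z
    rw [← (toDual ℝ E).map_sub, (toDual ℝ E).norm_map]
  have key : ∀ s : Set E, Convex ℝ s → ∀ C : ℝ, (∀ z ∈ s, ‖g' z - g' 0‖ ≤ C) →
      ∀ a ∈ s, ∀ b ∈ s, ‖F b - F a‖ ≤ C * ‖b - a‖ := by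
    intro s hs C hC a ha b hb
    exact Convex.norm_image_sub_le_of_norm_hasFDerivWithin_le
      (fun z hz => (hFd z).hasFDerivWithinAt)
      (fun z hz => by rw [hnorm z]; exact hC z hz) hs ha hb
  have mem0 : (0:E) ∈ Metric.closedBall (0:E) (‖y‖/2) := by
    simp; positivity
  have memh : ((1:ℝ)/2) • y ∈ Metric.closedBall (0:E) (‖y‖/2) := by
    simp [norm_smul]; linarith [norm_nonneg y]
  have memh2 : ((1:ℝ)/2) • y ∈ Metric.closedBall (0:E) ‖y‖ := by
    simp [norm_smul]; linarith [norm_nonneg y]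
  have memy : y ∈ Metric.closedBall (0:E) ‖y‖ := by simp
  have b1 : ‖F (((1:ℝ)/2) • y) - F 0‖ ≤ (Lg * (‖y‖/2)) * ‖((1:ℝ)/2) • y - 0‖ := by
    apply key _ (convex_closedBall _ _) _ _ _ mem0 _ memh
    intro z hz
    calc ‖g' z - g' 0‖ ≤ Lg * ‖z - 0‖ := hlip z 0
      _ ≤ Lg * (‖y‖/2) := by
          apply mul_le_mul_of_nonneg_left _ hLg0
          simpa using hz
  have b2 : ‖F y - F (((1:ℝ)/2) • y)‖ ≤ (Lg * ‖y‖) * ‖y - ((1:ℝ)/2) • y‖ := by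
    apply key _ (convex_closedBall _ _) _ _ _ memh2 _ memy
    intro z hz
    calc ‖g' z - g' 0‖ ≤ Lg * ‖z - 0‖ := hlip z 0
      _ ≤ Lg * ‖y‖ := by
          apply mul_le_mul_of_nonneg_left _ hLg0
          simpa using hz
  have hn1 : ‖((1:ℝ)/2) • y - 0‖ = ‖y‖/2 := by
    simp [norm_smul]; ring
  have hn2 : ‖y - ((1:ℝ)/2) • y‖ = ‖y‖/2 := by
    have : y - ((1:ℝ)/2) • y = ((1:ℝ)/2) • y := by
      rw [sub_eq_iff_eq_add, ← add_smul]; norm_num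
    rw [this, norm_smul]; simp; ring
  rw [hn1] at b1
  rw [hn2] at b2
  have hF0 : F 0 = g 0 := by simp [hF]
  have hFy : F y = g y - ⟪g' 0, y⟫ := rfl
  have htri : ‖F y - F 0‖ ≤ (Lg * ‖y‖) * (‖y‖/2) + (Lg * (‖y‖/2)) * (‖y‖/2) := by
    calc ‖F y - F 0‖ = ‖(F y - F (((1:ℝ)/2) • y)) + (F (((1:ℝ)/2) • y) - F 0)‖ := by ring_nf
      _ ≤ ‖F y - F (((1:ℝ)/2) • y)‖ + ‖F (((1:ℝ)/2) • y) - F 0‖ := norm_add_le _ _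
      _ ≤ (Lg * ‖y‖) * (‖y‖/2) + (Lg * (‖y‖/2)) * (‖y‖/2) := add_le_add b2 b1
  rw [hF0, hFy] at htri
  rw [Real.norm_eq_abs] at htri
  calc |g y - g 0 - ⟪g' 0, y⟫| = |g y - ⟪g' 0, y⟫ - g 0| := by ring_nf
    _ ≤ (Lg * ‖y‖) * (‖y‖/2) + (Lg * (‖y‖/2)) * (‖y‖/2) := htri
    _ = 3/4 * Lg * ‖y‖ ^ 2 := by ring


lemma aux_min_exists (Lg γ : ℝ) (hLg : 0 < Lg) (hγ : 0 < γ) (hγ2 : γ ≤ 1/(2*Lg))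
    (g : E → ℝ) (g' : E → E)
    (hg' : ∀ x, HasGradientAt g (g' x) x)
    (hlip : ∀ x y : E, ‖g' x - g' y‖ ≤ Lg * ‖x - y‖) (w : E) :
    ∃ p : E, ∀ y : E, 1/(2*γ) * ‖w - p‖^2 + g p ≤ 1/(2*γ) * ‖w - y‖^2 + g y := by
  have hcontg : Continuous g := by
    rw [continuous_iff_continuousAt]
    exact fun y => ((hg' y).hasFDerivAt.differentiableAt).continuousAt
  have hcontf : Continuous (fun y : E => 1/(2*γ) * ‖w - y‖^2 + g y) := by
    apply Continuous.add _ hcontg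
    exact continuous_const.mul (((continuous_const.sub continuous_id).norm).pow 2)
  have htay := aux_taylor Lg hLg.le g g' hg' hlip
  have hLg' : Lg ≤ 1/(2*γ) := by
    rw [le_div_iff₀ (by positivity : (0:ℝ) < 2*γ)]
    rw [le_div_iff₀ (by positivity : (0:ℝ) < 2*Lg)] at hγ2
    linarith
  set b := ‖g' 0‖ with hb
  set c := g 0 - 7*Lg*‖w‖^2 with hc
  have hml : ∀ y : E, Lg/8 * ‖y‖^2 - b * ‖y‖ + c ≤ 1/(2*γ) * ‖w - y‖^2 + g y := by
    intro y
    have h1 : |g y - g 0 - ⟪g' 0, y⟫| ≤ 3/4 * Lg * ‖y‖^2 := htay y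
    have h2 : |⟪g' 0, y⟫| ≤ b * ‖y‖ := abs_real_inner_le_norm _ _
    have h3 : ‖w - y‖^2 = ‖w‖^2 - 2*⟪w,y⟫ + ‖y‖^2 := norm_sub_sq_real w y
    have h4 : ⟪w,y⟫ ≤ ‖w‖ * ‖y‖ := real_inner_le_norm w y
    have h5 : 7/8 * ‖y‖^2 - 7*‖w‖^2 ≤ ‖w - y‖^2 := by
      nlinarith [sq_nonneg (8*‖w‖ - ‖y‖)]
    have h6 : Lg * ‖w-y‖^2 ≤ 1/(2*γ) * ‖w-y‖^2 :=
      mul_le_mul_of_nonneg_right hLg' (sq_nonneg _)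
    have h7 : -(b*‖y‖) ≤ ⟪g' 0, y⟫ := neg_le_of_abs_le h2
    have h8 : g 0 + ⟪g' 0, y⟫ - 3/4 * Lg * ‖y‖^2 ≤ g y := by
      have := abs_le.1 h1
      linarith [this.1]
    nlinarith [h5, hLg]
  have htend : Tendsto (fun y : E => 1/(2*γ) * ‖w - y‖^2 + g y) (cocompact E) atTop := by
    apply tendsto_atTop_mono hml
    have h9 : Tendsto (fun t : ℝ => Lg/8 * t^2 - b * t + c) atTop atTop := by
      apply tendsto_atTop_mono' _ _ (tendsto_atTop_add_const_right atTop c tendsto_id)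
      filter_upwards [eventually_ge_atTop (max (8*(b+1)/Lg) 0)] with t ht
      have ht0 : 0 ≤ t := le_trans (le_max_right _ _) ht
      have ht1 : 8*(b+1)/Lg ≤ t := le_trans (le_max_left _ _) ht
      rw [div_le_iff₀ hLg] at ht1
      simp only [id]
      nlinarith [mul_le_mul_of_nonneg_left ht1 (mul_nonneg ht0 (by positivity : (0:ℝ) ≤ Lg/8))]
    exact h9.comp tendsto_norm_cocompact_atTop
  exact hcontf.exists_forall_le htend
lemma aux_stationary (γ : ℝ) (hγ : 0 < γ) (g : E → ℝ) (g' : E → E)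
    (hg' : ∀ x, HasGradientAt g (g' x) x) (w p : E)
    (hmin : ∀ y : E, 1/(2*γ) * ‖w - p‖^2 + g p ≤ 1/(2*γ) * ‖w - y‖^2 + g y) :
    p + γ • g' p = w := by
  have hquad : HasGradientAt (fun y : E => 1/(2*γ) * ‖w - y‖^2) ((1/γ) • (p - w)) p := by
    apply aux_hasGradientAt_of_quad _ _ _ (1/(2*γ)) (by positivity)
    intro v
    have e0 : w - (p + v) = (w - p) - v := by abel
    have e1 : ‖w - (p+v)‖^2 = ‖w-p‖^2 - 2*⟪w-p,v⟫ + ‖v‖^2 := by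
      rw [e0]; exact norm_sub_sq_real (w-p) v
    have e2 : ⟪(1/γ) • (p - w), v⟫ = -((1/γ) * ⟪w-p, v⟫) := by
      rw [real_inner_smul_left]
      have : p - w = -(w - p) := by abel
      rw [this, inner_neg_left]; ring
    rw [e1, e2]
    have e3 : 1/(2*γ) * (‖w-p‖^2 - 2*⟪w-p,v⟫ + ‖v‖^2) - 1/(2*γ) * ‖w-p‖^2 -
        -((1/γ) * ⟪w-p, v⟫) = 1/(2*γ) * ‖v‖^2 := by
      field_simp; ring
    rw [e3, abs_of_nonneg (by positivity)]
  have hfull : HasFDerivAt (fun y : E => 1/(2*γ) * ‖w - y‖^2 + g y)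
      (toDual ℝ E ((1/γ) • (p - w)) + toDual ℝ E (g' p)) p :=
    hquad.hasFDerivAt.add (hg' p).hasFDerivAt
  have hloc : IsLocalMin (fun y : E => 1/(2*γ) * ‖w - y‖^2 + g y) p :=
    Filter.Eventually.of_forall hmin
  have hzero := hloc.hasFDerivAt_eq_zero hfull
  have h0 : (1/γ) • (p - w) + g' p = 0 := by
    apply (toDual ℝ E).injective
    rw [map_add, map_zero]
    exact hzero
  have hg'p : g' p = (1/γ) • (w - p) := by
    have h1 : g' p = -((1/γ) • (p - w)) := by
      rw [eq_neg_iff_add_eq_zero, add_comm]; exact h0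
    rw [h1, ← smul_neg]
    congr 1
    abel
  rw [hg'p, smul_smul, mul_one_div_cancel hγ.ne', one_smul]
  abel

lemma aux_lipschitz (Lg γ : ℝ) (hLg : 0 < Lg) (hγ : 0 < γ) (hγ2 : γ ≤ 1/(2*Lg))
    (g' : E → E) (hlip : ∀ x y : E, ‖g' x - g' y‖ ≤ Lg * ‖x - y‖)
    (p : E → E) (heq : ∀ w : E, p w + γ • g' (p w) = w) :
    ∀ w w' : E, ‖p w - p w'‖ ≤ 2 * ‖w - w'‖ := by
  have hγLg : γ * Lg ≤ 1/2 := by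
    rw [le_div_iff₀ (by positivity : (0:ℝ) < 2*Lg)] at hγ2
    linarith
  intro w w'
  set Δ := p w - p w' with hΔ
  have h1 : Δ + γ • (g' (p w) - g' (p w')) = w - w' := by
    have hw := heq w
    have hw' := heq w'
    rw [hΔ, smul_sub]
    conv_rhs => rw [← hw, ← hw']
    abel
  have h2 : ⟪Δ, Δ⟫ + γ * ⟪g' (p w) - g' (p w'), Δ⟫ = ⟪w - w', Δ⟫ := by
    have := congrArg (fun z => ⟪z, Δ⟫) h1
    simpa [inner_add_left, real_inner_smul_left] using this
  have h3 : ⟪Δ, Δ⟫ = ‖Δ‖^2 := real_inner_self_eq_norm_sq Δ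
  have h4 : -(Lg * ‖Δ‖^2) ≤ ⟪g' (p w) - g' (p w'), Δ⟫ := by
    have := abs_real_inner_le_norm (g' (p w) - g' (p w')) Δ
    have hb : ‖g' (p w) - g' (p w')‖ * ‖Δ‖ ≤ Lg * ‖Δ‖ * ‖Δ‖ :=
      mul_le_mul_of_nonneg_right (hlip _ _) (norm_nonneg _)
    have := neg_le_of_abs_le this
    nlinarith [this, hb]
  have h5 : ⟪w - w', Δ⟫ ≤ ‖w - w'‖ * ‖Δ‖ := real_inner_le_norm _ _
  have h6 : (1 - γ*Lg) * ‖Δ‖^2 ≤ ‖w - w'‖ * ‖Δ‖ := by nlinarith [h2, h3, h4, h5, hγ]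
  have h7 : ‖Δ‖^2 / 2 ≤ ‖w - w'‖ * ‖Δ‖ := by nlinarith [sq_nonneg ‖Δ‖]
  rcases eq_or_lt_of_le (norm_nonneg Δ) with h8 | h8
  · rw [← h8]; positivity
  · nlinarith [h7, h8]
lemma aux_hasFDerivAt_p (γ : ℝ) (hγ : 0 < γ) (g' : E → E) (A : E →L[ℝ] E) (p : E → E)
    (heq : ∀ w : E, p w + γ • g' (p w) = w)
    (hplip : ∀ w w' : E, ‖p w - p w'‖ ≤ 2 * ‖w - w'‖)
    (x : E) (hA : HasFDerivAt g' A (p x))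
    (B : E →L[ℝ] E) (hBT : ∀ y : E, B (y + γ • A y) = y) :
    HasFDerivAt p B x := by
  set r : E → E := fun y => g' y - g' (p x) - A (y - p x) with hrdef
  have hr : r =o[𝓝 (p x)] fun y => y - p x := by
    have := hasFDerivAt_iff_isLittleO.1 hA
    exact this
  have hcontp : Continuous p := by
    have : LipschitzWith 2 p := by
      apply LipschitzWith.of_dist_le_mul
      intro a b
      rw [dist_eq_norm, dist_eq_norm]
      exact_mod_cast hplip a b
    exact this.continuous
  have htend : Filter.Tendsto (fun h : E => p (x + h)) (𝓝 0) (𝓝 (p x)) := by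
    have h1 : Filter.Tendsto (fun h : E => x + h) (𝓝 0) (𝓝 x) := by
      have := (continuous_add_left x).tendsto (0 : E)
      simpa using this
    exact (hcontp.tendsto x).comp h1
  have step3 : (fun h : E => r (p (x + h))) =o[𝓝 0] fun h : E => p (x + h) - p x :=
    hr.comp_tendsto htend
  have step4 : (fun h : E => p (x + h) - p x) =O[𝓝 0] fun h : E => h := by
    apply IsBigO.of_bound 2
    filter_upwards with h
    have := hplip (x + h) x
    simpa using this
  have step5 : (fun h : E => r (p (x + h))) =o[𝓝 0] fun h : E => h :=
    step3.trans_isBigO step4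
  have step6 : (fun h : E => B (r (p (x + h)))) =o[𝓝 0] fun h : E => h := by
    have hO : (fun h : E => B (r (p (x + h)))) =O[𝓝 0] fun h : E => r (p (x + h)) := by
      apply IsBigO.of_bound ‖B‖
      filter_upwards with h
      exact B.le_opNorm _
    exact hO.trans_isLittleO step5
  have step7 : (fun h : E => (-γ) • B (r (p (x + h)))) =o[𝓝 0] fun h : E => h :=
    step6.const_smul_left (-γ)
  rw [hasFDerivAt_iff_isLittleO_nhds_zero]
  apply step7.congr_left
  intro h
  set q := p (x + h) - p x with hqdef
  have e1 : (p (x + h) + γ • g' (p (x + h))) - (p x + γ • g' (p x)) = h := by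
    rw [heq, heq]
    abel
  have hq1 : q + γ • (g' (p (x + h)) - g' (p x)) = h := by
    rw [hqdef, smul_sub]
    conv_rhs => rw [← e1]
    abel
  have hq2 : g' (p (x + h)) - g' (p x) = A q + r (p (x + h)) := by
    rw [hrdef]
    simp only [hqdef]
    abel
  have hq3 : (q + γ • A q) + γ • r (p (x + h)) = h := by
    conv_rhs => rw [← hq1]
    rw [hq2, smul_add]
    abel
  have e3 : B h = q + γ • B (r (p (x + h))) := by
    calc B h = B ((q + γ • A q) + γ • r (p (x + h))) := by rw [hq3]
      _ = B (q + γ • A q) + γ • B (r (p (x + h))) := by rw [map_add, map_smul]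
      _ = q + γ • B (r (p (x + h))) := by rw [hBT]
  rw [e3, neg_smul]
  abel


set_option maxHeartbeats 1600000 in
/-- If `g` is C² with `∇g` `L_g`-Lipschitz and `⟨∇²g(z)v, v⟩ ≥ μ‖v‖²`
whenever `‖z‖ ≥ R`, then there exists `R₀ ≥ 0` such that for every `γ ∈ (0, 1/(2L_g)]`
the Moreau envelope `g^γ` is twice differentiable outside `B(0, R₀)` with
`⟨∇²g^γ(x)v, v⟩ ≥ (μ/(1 + γμ))‖v‖²` there; i.e., `g^γ` is `μ/(1+γμ)`-strongly convex
outside `B(0, R₀)`. -/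
theorem moreau_envelope_strongly_convex_at_infinity (d : ℕ) (hd : 1 ≤ d)
    (Lg μ R : ℝ) (hLg : 0 < Lg) (hμ : 0 < μ) (hR : 0 ≤ R)
    (g : EuclideanSpace ℝ (Fin d) → ℝ)
    (g' : EuclideanSpace ℝ (Fin d) → EuclideanSpace ℝ (Fin d))
    (g'' : EuclideanSpace ℝ (Fin d) →
      (EuclideanSpace ℝ (Fin d) →L[ℝ] EuclideanSpace ℝ (Fin d)))
    (hg' : ∀ x, HasGradientAt g (g' x) x)
    (hg'' : ∀ x, HasFDerivAt g' (g'' x) x)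
    (hg''cont : Continuous g'')
    (hlip : ∀ x y : EuclideanSpace ℝ (Fin d), ‖g' x - g' y‖ ≤ Lg * ‖x - y‖)
    (hconvinf : ∀ z : EuclideanSpace ℝ (Fin d), R ≤ ‖z‖ →
      ∀ v : EuclideanSpace ℝ (Fin d), μ * ‖v‖ ^ 2 ≤ ⟪g'' z v, v⟫) :
    ∃ R₀ : ℝ, 0 ≤ R₀ ∧
      ∀ γ : ℝ, 0 < γ → γ ≤ 1 / (2 * Lg) →
        ∃ G : EuclideanSpace ℝ (Fin d) → EuclideanSpace ℝ (Fin d),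
          (∀ z : EuclideanSpace ℝ (Fin d),
            HasGradientAt
              (fun w : EuclideanSpace ℝ (Fin d) =>
                ⨅ y : EuclideanSpace ℝ (Fin d), 1 / (2 * γ) * ‖w - y‖ ^ 2 + g y)
              (G z) z) ∧
          ∀ x : EuclideanSpace ℝ (Fin d), R₀ ≤ ‖x‖ →
            ∃ H : EuclideanSpace ℝ (Fin d) →L[ℝ] EuclideanSpace ℝ (Fin d),
              HasFDerivAt G H x ∧
              ∀ v : EuclideanSpace ℝ (Fin d),
                μ / (1 + γ * μ) * ‖v‖ ^ 2 ≤ ⟪H v, v⟫ := by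
  classical
  refine ⟨3/2*R + ‖g' 0‖/(2*Lg), by positivity, ?_⟩
  intro γ hγ0 hγle
  -- the proximal map
  choose p hp using aux_min_exists Lg γ hLg hγ0 hγle g g' hg' hlip
  have heq : ∀ w, p w + γ • g' (p w) = w :=
    fun w => aux_stationary γ hγ0 g g' hg' w (p w) (hp w)
  have hplip := aux_lipschitz Lg γ hLg hγ0 hγle g' hlip p heq
  set env : EuclideanSpace ℝ (Fin d) → ℝ := fun w => ⨅ y : EuclideanSpace ℝ (Fin d), 1 / (2 * γ) * ‖w - y‖ ^ 2 + g y with henvdef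
  have hbdd : ∀ w : EuclideanSpace ℝ (Fin d), BddBelow (Set.range fun y : EuclideanSpace ℝ (Fin d) => 1/(2*γ) * ‖w - y‖^2 + g y) := by
    intro w
    refine ⟨1/(2*γ) * ‖w - p w‖^2 + g (p w), ?_⟩
    rintro z ⟨y, rfl⟩
    exact hp w y
  have henv : ∀ w : EuclideanSpace ℝ (Fin d), env w = 1/(2*γ) * ‖w - p w‖^2 + g (p w) :=
    fun w => le_antisymm (ciInf_le (hbdd w) (p w)) (le_ciInf (hp w))
  have henvle : ∀ w y : EuclideanSpace ℝ (Fin d), env w ≤ 1/(2*γ) * ‖w - y‖^2 + g y :=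
    fun w y => ciInf_le (hbdd w) y
  set G : EuclideanSpace ℝ (Fin d) → EuclideanSpace ℝ (Fin d) := fun w => (1/γ) • (w - p w) with hGdef
  have hGinner : ∀ w v : EuclideanSpace ℝ (Fin d), ⟪G w, v⟫ = (1/γ) * ⟪w - p w, v⟫ := by
    intro w v; rw [hGdef]; exact real_inner_smul_left _ _ _
  have hGdiff : ∀ z : EuclideanSpace ℝ (Fin d), HasGradientAt env (G z) z := by
    intro z
    apply aux_hasGradientAt_of_quad env (G z) z (4/γ) (by positivity)
    intro v
    have hup : env (z+v) - env z - ⟪G z, v⟫ ≤ 1/(2*γ) * ‖v‖^2 := by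
      have h1 : env (z+v) ≤ 1/(2*γ) * ‖(z+v) - p z‖^2 + g (p z) := henvle (z+v) (p z)
      have h2 : ‖(z+v) - p z‖^2 = ‖z - p z‖^2 + 2*⟪z - p z, v⟫ + ‖v‖^2 := by
        have e0 : (z+v) - p z = (z - p z) + v := by abel
        rw [e0]; exact norm_add_sq_real _ _
      have h3 := henv z
      rw [hGinner]
      have key : 1/(2*γ) * ‖(z+v) - p z‖^2 + g (p z) =
          env z + 1/γ * ⟪z - p z, v⟫ + 1/(2*γ) * ‖v‖^2 := by
        rw [h2, h3]; field_simp; ring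
      linarith [h1, key]
    have hlow : -(4/γ) * ‖v‖^2 ≤ env (z+v) - env z - ⟪G z, v⟫ := by
      set q := p (z+v) with hqdef
      have h1 : env z ≤ 1/(2*γ) * ‖z - q‖^2 + g q := henvle z q
      have h2 : ‖z - q‖^2 = ‖(z+v) - q‖^2 - 2*⟪(z+v) - q, v⟫ + ‖v‖^2 := by
        have e0 : z - q = ((z+v) - q) - v := by abel
        rw [e0]; exact norm_sub_sq_real _ _
      have h3 := henv (z+v)
      have h4 : ⟪(z+v) - q, v⟫ = γ * ⟪G (z+v), v⟫ := by
        rw [hGinner, hqdef]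
        rw [← mul_assoc, mul_one_div, div_self hγ0.ne', one_mul]
      -- env (z+v) - env z ≥ ⟪G (z+v), v⟫ - 1/(2γ)‖v‖²
      have h5 : ⟪G (z+v), v⟫ - 1/(2*γ) * ‖v‖^2 ≤ env (z+v) - env z := by
        have key2 : 1/(2*γ) * ‖z - q‖^2 + g q =
            env (z+v) - ⟪G (z+v), v⟫ + 1/(2*γ) * ‖v‖^2 := by
          rw [h2, h4, h3]; field_simp; ring
        linarith [h1, key2]
      -- compare G (z+v) and G z
      have h6 : ‖G (z+v) - G z‖ ≤ 3/γ * ‖v‖ := by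
        have e1 : G (z+v) - G z = (1/γ) • (v - (p (z+v) - p z)) := by
          rw [hGdef]
          simp only
          rw [← smul_sub]
          congr 1
          abel
        rw [e1, norm_smul, Real.norm_eq_abs, abs_of_pos (by positivity : (0:ℝ) < 1/γ)]
        have e2 : ‖v - (p (z+v) - p z)‖ ≤ ‖v‖ + 2*‖v‖ := by
          calc ‖v - (p (z+v) - p z)‖ ≤ ‖v‖ + ‖p (z+v) - p z‖ := norm_sub_le _ _
            _ ≤ ‖v‖ + 2*‖(z+v) - z‖ := by linarith [hplip (z+v) z]
            _ = ‖v‖ + 2*‖v‖ := by rw [show (z+v) - z = v by abel]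
        calc 1/γ * ‖v - (p (z+v) - p z)‖ ≤ 1/γ * (3*‖v‖) := by
              apply mul_le_mul_of_nonneg_left _ (by positivity)
              linarith
          _ = 3/γ * ‖v‖ := by ring
      have h7 : -(3/γ * ‖v‖) * ‖v‖ ≤ ⟪G (z+v) - G z, v⟫ := by
        have := abs_real_inner_le_norm (G (z+v) - G z) v
        have hb : ‖G (z+v) - G z‖ * ‖v‖ ≤ (3/γ * ‖v‖) * ‖v‖ :=
          mul_le_mul_of_nonneg_right h6 (norm_nonneg _)
        have := neg_le_of_abs_le this
        nlinarith
      have h8 : ⟪G (z+v), v⟫ = ⟪G z, v⟫ + ⟪G (z+v) - G z, v⟫ := by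
        rw [← inner_add_left]
        congr 1
        abel
      have hpos : 0 ≤ 1/γ * ‖v‖^2 := by positivity
      have ehalf : 1/(2*γ) = 1/2 * (1/γ) := by field_simp
      have e7 : -(3/γ * ‖v‖) * ‖v‖ = -3 * (1/γ * ‖v‖^2) := by ring
      rw [ehalf] at h5
      rw [e7] at h7
      have e4 : -(4/γ) * ‖v‖^2 = -4 * (1/γ * ‖v‖^2) := by ring
      rw [e4]
      linarith [h5, h7, h8, hpos]
    rw [abs_le]
    have hpos : 0 ≤ 1/γ * ‖v‖^2 := by positivity
    have ehalf : 1/(2*γ) = 1/2 * (1/γ) := by field_simp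
    have e4 : 4/γ * ‖v‖^2 = 4 * (1/γ * ‖v‖^2) := by ring
    have e4' : -(4/γ * ‖v‖^2) = -4 * (1/γ * ‖v‖^2) := by ring
    have e4'' : -(4/γ) * ‖v‖^2 = -4 * (1/γ * ‖v‖^2) := by ring
    rw [ehalf] at hup
    rw [e4''] at hlow
    constructor
    · rw [e4']; linarith [hlow, hpos]
    · rw [e4]; linarith [hup, hpos]
  refine ⟨G, hGdiff, ?_⟩
  intro x hx
  -- the minimizer is far out
  have hpR : R ≤ ‖p x‖ := by
    have h1 : ‖x‖ ≤ ‖p x‖ + γ * (Lg * ‖p x‖) + γ * ‖g' 0‖ := by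
      conv_lhs => rw [← heq x]
      calc ‖p x + γ • g' (p x)‖ ≤ ‖p x‖ + ‖γ • g' (p x)‖ := norm_add_le _ _
        _ = ‖p x‖ + γ * ‖g' (p x)‖ := by
            rw [norm_smul, Real.norm_eq_abs, abs_of_pos hγ0]
        _ ≤ ‖p x‖ + γ * (‖g' (p x) - g' 0‖ + ‖g' 0‖) := by
            have := norm_sub_le_norm_sub_add_norm_sub (g' (p x)) 0 (g' 0)
            have h2 : ‖g' (p x)‖ ≤ ‖g' (p x) - g' 0‖ + ‖g' 0‖ := by
              calc ‖g' (p x)‖ = ‖(g' (p x) - g' 0) + g' 0‖ := by rw [sub_add_cancel]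
                _ ≤ ‖g' (p x) - g' 0‖ + ‖g' 0‖ := norm_add_le _ _
            have := mul_le_mul_of_nonneg_left h2 hγ0.le
            linarith
        _ ≤ ‖p x‖ + γ * (Lg * ‖p x‖) + γ * ‖g' 0‖ := by
            have h3 : ‖g' (p x) - g' 0‖ ≤ Lg * ‖p x‖ := by
              have := hlip (p x) 0
              simpa using this
            have := mul_le_mul_of_nonneg_left h3 hγ0.le
            nlinarith
    have hγLg : γ * Lg ≤ 1/2 := by
      rw [le_div_iff₀ (by positivity : (0:ℝ) < 2*Lg)] at hγle
      linarith
    have hγb : γ * ‖g' 0‖ ≤ ‖g' 0‖/(2*Lg) := by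
      rw [le_div_iff₀ (by positivity : (0:ℝ) < 2*Lg)] at hγle
      rw [div_eq_mul_inv, ← mul_le_mul_iff_of_pos_right (by positivity : (0:ℝ) < 2*Lg),
        mul_assoc, mul_assoc, inv_mul_cancel₀ (by positivity : (2*Lg) ≠ 0), mul_one]
      nlinarith [norm_nonneg (g' 0)]
    have h4 : 3/2*R + ‖g' 0‖/(2*Lg) ≤ ‖x‖ := hx
    nlinarith [norm_nonneg (p x), mul_le_mul_of_nonneg_right hγLg (norm_nonneg (p x))]
  set A := g'' (p x) with hAdef
  have hApos : ∀ v : EuclideanSpace ℝ (Fin d), μ * ‖v‖^2 ≤ ⟪A v, v⟫ := hconvinf (p x) hpR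
  set T : EuclideanSpace ℝ (Fin d) →L[ℝ] EuclideanSpace ℝ (Fin d) := ContinuousLinearMap.id ℝ (EuclideanSpace ℝ (Fin d)) + γ • A with hTdef
  have hTv : ∀ v : EuclideanSpace ℝ (Fin d), T v = v + γ • A v := by
    intro v
    rw [hTdef]
    rw [ContinuousLinearMap.add_apply, ContinuousLinearMap.smul_apply,
      ContinuousLinearMap.id_apply]
  have hTinj : Function.Injective T := by
    intro a b hab
    have h1 : T (a - b) = 0 := by rw [map_sub, hab, sub_self]
    have h2 : ⟪T (a-b), a-b⟫ = 0 := by rw [h1, inner_zero_left]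
    rw [hTv, inner_add_left, real_inner_smul_left, real_inner_self_eq_norm_sq] at h2
    have h3 := hApos (a - b)
    have h4 : (0:ℝ) ≤ γ * ⟪A (a-b), a-b⟫ :=
      mul_nonneg hγ0.le (le_trans (by positivity) h3)
    have h5 : ‖a - b‖^2 ≤ 0 := by linarith
    have h6 : a - b = 0 := by
      rw [← norm_eq_zero]
      nlinarith [sq_nonneg ‖a-b‖, norm_nonneg (a-b)]
    rwa [sub_eq_zero] at h6
  have hTinj' : Function.Injective (T : EuclideanSpace ℝ (Fin d) →ₗ[ℝ] EuclideanSpace ℝ (Fin d)) := hTinj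
  have hTsurj : Function.Surjective (T : EuclideanSpace ℝ (Fin d) →ₗ[ℝ] EuclideanSpace ℝ (Fin d)) :=
    LinearMap.injective_iff_surjective.1 hTinj'
  set e : EuclideanSpace ℝ (Fin d) ≃ₗ[ℝ] EuclideanSpace ℝ (Fin d) := LinearEquiv.ofBijective (T : EuclideanSpace ℝ (Fin d) →ₗ[ℝ] EuclideanSpace ℝ (Fin d)) ⟨hTinj', hTsurj⟩ with hedef
  set B : EuclideanSpace ℝ (Fin d) →L[ℝ] EuclideanSpace ℝ (Fin d) := LinearMap.toContinuousLinearMap (e.symm : EuclideanSpace ℝ (Fin d) →ₗ[ℝ] EuclideanSpace ℝ (Fin d)) with hBdef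
  have hBapp : ∀ z : EuclideanSpace ℝ (Fin d), B z = e.symm z := fun z => rfl
  have heapp : ∀ y : EuclideanSpace ℝ (Fin d), e y = T y := fun y => rfl
  have hBT : ∀ y : EuclideanSpace ℝ (Fin d), B (y + γ • A y) = y := by
    intro y
    have h1 : y + γ • A y = e y := by rw [heapp, hTv]
    rw [h1, hBapp, e.symm_apply_apply]
  have hTB : ∀ v : EuclideanSpace ℝ (Fin d), B v + γ • A (B v) = v := by
    intro v
    have h1 : T (B v) = v := by
      rw [hBapp]
      exact e.apply_symm_apply v
    rw [← hTv, h1]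
  have hpB : HasFDerivAt p B x :=
    aux_hasFDerivAt_p γ hγ0 g' A p heq hplip x (hg'' (p x)) B hBT
  have hGd : HasFDerivAt G ((1/γ) • (ContinuousLinearMap.id ℝ (EuclideanSpace ℝ (Fin d)) - B)) x := by
    have h1 : HasFDerivAt (fun w : EuclideanSpace ℝ (Fin d) => w - p w) (ContinuousLinearMap.id ℝ (EuclideanSpace ℝ (Fin d)) - B) x :=
      (hasFDerivAt_id x).sub hpB
    exact h1.const_smul (1/γ)
  refine ⟨(1/γ) • (ContinuousLinearMap.id ℝ (EuclideanSpace ℝ (Fin d)) - B), hGd, ?_⟩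
  intro v
  set u := B v with hudef
  have hvu : v = u + γ • A u := (hTB v).symm
  have hHv : ((1/γ) • (ContinuousLinearMap.id ℝ (EuclideanSpace ℝ (Fin d)) - B)) v = A u := by
    rw [ContinuousLinearMap.smul_apply, ContinuousLinearMap.sub_apply,
      ContinuousLinearMap.id_apply, ← hudef]
    have h1 : v - u = γ • A u := by rw [hvu]; abel
    rw [h1, smul_smul, one_div_mul_cancel hγ0.ne', one_smul]
  rw [hHv]
  have hinner : ⟪A u, v⟫ = ⟪A u, u⟫ + γ * ⟪A u, A u⟫ := by
    rw [hvu, inner_add_right, real_inner_smul_right]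
  have hnv : ‖v‖^2 = ‖u‖^2 + 2*γ*⟪A u, u⟫ + γ^2 * ‖A u‖^2 := by
    rw [hvu]
    rw [norm_add_sq_real, real_inner_smul_right, norm_smul, Real.norm_eq_abs,
      abs_of_pos hγ0, mul_pow, real_inner_comm u (A u)]
    ring
  have hsAA : ⟪A u, A u⟫ = ‖A u‖^2 := real_inner_self_eq_norm_sq _
  set a := ⟪A u, u⟫ with hadef
  set s := ‖A u‖^2 with hsdef
  set t := ‖u‖^2 with htdef
  have hat : μ * t ≤ a := hApos u
  have hcs : a^2 ≤ s * t := by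
    have h1 : |a| ≤ ‖A u‖ * ‖u‖ := abs_real_inner_le_norm _ _
    nlinarith [abs_nonneg a, sq_abs a, norm_nonneg (A u), norm_nonneg u]
  have ht0 : (0:ℝ) ≤ t := sq_nonneg _
  have hs0 : (0:ℝ) ≤ s := sq_nonneg _
  have ha0 : (0:ℝ) ≤ a := le_trans (by positivity) hat
  rw [hinner, hsAA, hnv]
  rw [div_mul_eq_mul_div, div_le_iff₀ (by positivity : (0:ℝ) < 1 + γ * μ)]
  rcases eq_or_lt_of_le ht0 with ht | ht
  · -- t = 0 : then a = 0
    have ha : a = 0 := by nlinarith [hcs, sq_nonneg a]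
    rw [ha, ← ht]
    nlinarith [hs0, hγ0, hμ]
  · nlinarith [mul_nonneg (sub_nonneg.2 hat) ht.le,
      mul_nonneg (mul_nonneg hγ0.le ha0) (sub_nonneg.2 hat),
      mul_nonneg hγ0.le (sub_nonneg.2 hcs), ht, hγ0, hμ]
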